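/- Let Q_k = 3^{2k} − 3^k + 1. For every integer k ≥ 1, the set X(1, Q_k) of 3-adic digit sequences of elements of C(1, Q_k) equals the k-interleaving of the digit-sequence set of C(1, 7): X(1, Q_k) = X(1, 7)^{(*k)} as subsets of {0,1,2}^ℕ. -/

import Mathlib

open MeasureTheory ENNReal

noncomputable section

/-- The 3-adic Cantor set: 3-adic integers whose 3-adic expansion uses only digits 0 and 1. -/
def Sigma3 : Set ℤ_[3] :=
  {x | ∃ a : ℕ → ℕ, (∀ i, a i ≤ 1) ∧ x = ∑' i, (a i : ℤ_[3]) * 3 ^ i}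

/-- `C1 M = C(1, M) = {x : x ∈ Σ and M·x ∈ Σ}`. -/
def C1 (M : ℕ) : Set ℤ_[3] :=
  {x | x ∈ Sigma3 ∧ (M : ℤ_[3]) * x ∈ Sigma3}

/-- `X1 M = X(1, M)`: the set of 3-adic digit sequences (valued in {0,1,2}) of
elements of C(1, M). -/
def X1 (M : ℕ) : Set (ℕ → Fin 3) :=
  {a | (∑' i, ((a i : ℕ) : ℤ_[3]) * 3 ^ i) ∈ C1 M}

/-- The n-interleaving of a set of sequences. -/
def Interleave {A : Type*} (n : ℕ) (X : Set (ℕ → A)) : Set (ℕ → A) :=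
  {x | ∀ j < n, (fun i => x (j + i * n)) ∈ X}

/-! ### Auxiliary machinery -/

lemma norm3 : ‖(3:ℤ_[3])‖ = (3:ℝ)⁻¹ := by
  have := PadicInt.norm_p (p := 3)
  simpa using this

/-- The 3-adic integer with "generalized digits" `u`. -/
def ser (u : ℕ → ℤ) : ℤ_[3] := ∑' i, (u i : ℤ_[3]) * 3 ^ i

lemma summable_ser (u : ℕ → ℤ) : Summable (fun i => ((u i : ℤ_[3]) * 3 ^ i)) := by
  apply Summable.of_norm_bounded (g := fun i => (3:ℝ)⁻¹ ^ i)
  · exact summable_geometric_of_lt_one (by norm_num) (by norm_num)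
  · intro i
    rw [norm_mul, norm_pow, norm3]
    calc ‖((u i : ℤ_[3]))‖ * (3:ℝ)⁻¹ ^ i ≤ 1 * (3:ℝ)⁻¹ ^ i := by
          gcongr; exact PadicInt.norm_le_one _
      _ = (3:ℝ)⁻¹ ^ i := one_mul _

lemma ser_shift (u : ℕ → ℤ) (k : ℕ) :
    (3:ℤ_[3]) ^ k * ser u = ser (fun i => if k ≤ i then u (i - k) else 0) := by
  rw [ser, ← (summable_ser u).tsum_mul_left ((3:ℤ_[3])^k), ser,
    ← Summable.sum_add_tsum_nat_add (f := fun i => ((if k ≤ i then u (i-k) else 0 : ℤ) : ℤ_[3]) * 3 ^ i) k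
      (summable_ser _)]
  have h1 : ∀ i ∈ Finset.range k, ((if k ≤ i then u (i-k) else 0 : ℤ) : ℤ_[3]) * 3 ^ i = 0 := by
    intro i hi
    simp [Nat.not_le.2 (Finset.mem_range.1 hi)]
  rw [Finset.sum_congr rfl h1]
  simp only [Finset.sum_const_zero, zero_add]
  apply tsum_congr
  intro i
  have h : k ≤ i + k := Nat.le_add_left k i
  rw [if_pos h, Nat.add_sub_cancel]
  ring

lemma ser_add (u v : ℕ → ℤ) : ser u + ser v = ser (fun i => u i + v i) := by
  rw [ser, ser, ser, ← Summable.tsum_add (summable_ser u) (summable_ser v)]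
  apply tsum_congr; intro i; push_cast; ring

lemma ser_sub (u v : ℕ → ℤ) : ser u - ser v = ser (fun i => u i - v i) := by
  rw [ser, ser, ser, ← Summable.tsum_sub (summable_ser u) (summable_ser v)]
  apply tsum_congr; intro i; push_cast; ring

lemma ser_head (u : ℕ → ℤ) : ser u = (u 0 : ℤ_[3]) + 3 * ser (fun i => u (i+1)) := by
  rw [ser, ser, ← Summable.sum_add_tsum_nat_add (f := fun i => ((u i : ℤ) : ℤ_[3]) * 3 ^ i) 1
    (summable_ser _), ← (summable_ser _).tsum_mul_left (3:ℤ_[3])]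
  congr 1
  · simp
  · apply tsum_congr; intro i; ring

lemma rigid_step (d : ℕ → ℤ) (hb : ∀ n, |d n| ≤ 2) (h : ser d = 0) :
    d 0 = 0 ∧ ser (fun i => d (i+1)) = 0 := by
  set T := ser (fun i => d (i+1)) with hT
  have hh : (0:ℤ_[3]) = (d 0 : ℤ_[3]) + 3 * T := by rw [← h]; exact ser_head d
  have h0 : (d 0 : ℤ_[3]) = -(3 * T) := by linear_combination -hh
  have hdvd : (3:ℤ) ∣ d 0 := by
    have h9 : (((3:ℕ):ℤ)) ∣ d 0 → (3:ℤ) ∣ d 0 := by norm_num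
    apply h9
    rw [← PadicInt.norm_int_lt_one_iff_dvd (p := 3)]
    rw [h0, norm_neg, norm_mul, norm3]
    calc (3:ℝ)⁻¹ * ‖T‖ ≤ 3⁻¹ * 1 := by gcongr; exact PadicInt.norm_le_one _
      _ < 1 := by norm_num
  have hd0 : d 0 = 0 := by
    obtain ⟨c, hc⟩ := hdvd; have := hb 0; rw [abs_le] at this; omega
  refine ⟨hd0, ?_⟩
  have h3T : (3:ℤ_[3]) * T = 0 := by rw [hh, hd0]; push_cast; ring
  rcases mul_eq_zero.1 h3T with h3 | h
  · exfalso; have hn := norm3; rw [h3] at hn; norm_num at hn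
  · exact h

lemma rigid (d : ℕ → ℤ) (hb : ∀ n, |d n| ≤ 2) (h : ser d = 0) : ∀ i, d i = 0 := by
  intro i
  induction i generalizing d with
  | zero => exact (rigid_step d hb h).1
  | succ i ih => exact ih (fun n => d (n+1)) (fun n => hb (n+1)) (rigid_step d hb h).2

lemma ser_natCast (a : ℕ → ℕ) : ser (fun i => (a i : ℤ)) = ∑' i, (a i : ℤ_[3]) * 3 ^ i := by
  rw [ser]; apply tsum_congr; intro i; push_cast; ring

lemma mem_Sigma3_ser (u : ℕ → ℤ) (hu : ∀ i, -1 ≤ u i ∧ u i ≤ 2) :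
    ser u ∈ Sigma3 ↔ ∀ i, u i = 0 ∨ u i = 1 := by
  constructor
  · rintro ⟨a, ha1, hx⟩ i
    have h0 : ser u - ser (fun i => (a i : ℤ)) = 0 := by
      rw [ser_natCast, ← hx, sub_self]
    rw [ser_sub] at h0
    have := rigid _ (fun n => by
      have h1 := ha1 n; have h2 := hu n; rw [abs_le]; omega) h0 i
    have h1 := ha1 i
    omega
  · intro h
    refine ⟨fun i => (u i).toNat, fun i => by have := h i; simp only []; omega, ?_⟩
    rw [ser]
    apply tsum_congr; intro i
    congr 1
    have h2 : ((u i).toNat : ℤ) = u i := by have := h i; omega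
    rw [← h2]; push_cast; ring

/-- The coefficient sequence of `(3^(2k) - 3^k + 1) · x` where `x` has digits `a`. -/
def coeff (a : ℕ → Fin 3) (k : ℕ) (i : ℕ) : ℤ :=
  ((a i : ℕ) : ℤ) - (if k ≤ i then ((a (i-k) : ℕ) : ℤ) else 0)
    + (if 2*k ≤ i then ((a (i-2*k) : ℕ) : ℤ) else 0)

lemma coeff_bound (a : ℕ → Fin 3) (k : ℕ) (ha : ∀ i, (a i : ℕ) ≤ 1) (i : ℕ) :
    -1 ≤ coeff a k i ∧ coeff a k i ≤ 2 := by
  have h1 := ha i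
  have h2 : (a (i-k) : ℕ) ≤ 1 := ha _
  have h3 : (a (i-2*k) : ℕ) ≤ 1 := ha _
  unfold coeff
  split_ifs <;> omega

lemma mulQ (a : ℕ → Fin 3) (k : ℕ) :
    ((3^(2*k) - 3^k + 1 : ℕ) : ℤ_[3]) * ser (fun i => ((a i : ℕ) : ℤ)) = ser (coeff a k) := by
  have hle : (3:ℕ)^k ≤ 3^(2*k) := Nat.pow_le_pow_right (by norm_num) (by omega)
  have hM : ((3^(2*k) - 3^k + 1 : ℕ) : ℤ_[3]) = 3^(2*k) - 3^k + 1 := by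
    push_cast [Nat.cast_sub hle]; ring
  set u : ℕ → ℤ := fun i => ((a i : ℕ) : ℤ) with hu
  rw [hM, add_mul, sub_mul, one_mul, ser_shift u (2*k), ser_shift u k, ser_sub, ser_add]
  congr 1
  funext i
  simp only [coeff, hu]
  ring

lemma coeff_interleave (a : ℕ → Fin 3) (k : ℕ) (hk : 1 ≤ k) (j : ℕ) (hj : j < k) (i : ℕ) :
    coeff (fun m => a (j + m * k)) 1 i = coeff a k (j + i * k) := by
  unfold coeff
  simp only []
  match i with
  | 0 =>
      have c1 : ¬ k ≤ j + 0 * k := by omega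
      have c2 : ¬ 2 * k ≤ j + 0 * k := by omega
      rw [if_neg c1, if_neg c2, if_neg (by omega : ¬ (1:ℕ) ≤ 0), if_neg (by omega : ¬ 2*1 ≤ 0)]
  | 1 =>
      have c1 : k ≤ j + 1 * k := by omega
      have c2 : ¬ 2 * k ≤ j + 1 * k := by omega
      have e : j + 1 * k - k = j + (1-1) * k := by omega
      rw [if_pos c1, if_neg c2, if_pos (le_refl 1), if_neg (by omega : ¬ 2*1 ≤ 1), e]
  | (n+2) =>
      have hk1 : (n+2) * k = n*k + k + k := by ring
      have hk2 : (n+2-1) * k = n*k + k := by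
        have e : n+2-1 = n+1 := by omega
        rw [e]; ring
      have hk3 : (n+2-2*1) * k = n*k := by
        have e : n+2-2*1 = n := by omega
        rw [e]
      have c1 : k ≤ j + (n+2) * k := by omega
      have c2 : 2 * k ≤ j + (n+2) * k := by omega
      have e1 : j + (n+2) * k - k = j + (n+2-1) * k := by omega
      have e2 : j + (n+2) * k - 2*k = j + (n+2-2*1) * k := by omega
      have d1 : (1:ℕ) ≤ n+2 := by omega
      have d2 : 2*1 ≤ n+2 := by omega
      rw [if_pos c1, if_pos c2, if_pos d1, if_pos d2, e1, e2]

lemma key (a : ℕ → Fin 3) (k : ℕ) :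
    (∑' i, ((a i : ℕ) : ℤ_[3]) * 3 ^ i) ∈ C1 (3^(2*k) - 3^k + 1) ↔
      (∀ i, ((a i : ℕ) : ℤ) = 0 ∨ ((a i : ℕ) : ℤ) = 1) ∧
      (∀ i, coeff a k i = 0 ∨ coeff a k i = 1) := by
  set u : ℕ → ℤ := fun i => ((a i : ℕ) : ℤ) with hu
  have hx : (∑' i, ((a i : ℕ) : ℤ_[3]) * 3 ^ i) = ser u := (ser_natCast _).symm
  have hub : ∀ i, -1 ≤ u i ∧ u i ≤ 2 := by
    intro i; have : (a i : ℕ) ≤ 2 := by omega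
    simp only [hu]; omega
  rw [C1, Set.mem_setOf_eq, hx, mem_Sigma3_ser u hub]
  constructor
  · rintro ⟨h1, h2⟩
    refine ⟨h1, ?_⟩
    have ha1 : ∀ i, (a i : ℕ) ≤ 1 := by intro i; have := h1 i; simp only [hu] at this; omega
    rw [mulQ a k] at h2
    exact (mem_Sigma3_ser _ (coeff_bound a k ha1)).1 h2
  · rintro ⟨h1, h2⟩
    refine ⟨h1, ?_⟩
    have ha1 : ∀ i, (a i : ℕ) ≤ 1 := by intro i; have := h1 i; omega
    rw [mulQ a k]
    exact (mem_Sigma3_ser _ (coeff_bound a k ha1)).2 h2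

/-- For every k ≥ 1, X(1, Q_k) = X(1, 7)^(*k), where Q_k = 3^(2k) − 3^k + 1. -/
theorem X1_Qk_eq_interleave (k : ℕ) (hk : 1 ≤ k) :
    X1 (3 ^ (2 * k) - 3 ^ k + 1) = Interleave k (X1 7) := by
  ext a
  have h7 : (7:ℕ) = 3^(2*1) - 3^1 + 1 := by norm_num
  rw [X1, Interleave, Set.mem_setOf_eq, Set.mem_setOf_eq, key a k]
  constructor
  · rintro ⟨h1, h2⟩ j hj
    rw [X1, Set.mem_setOf_eq, h7, key (fun m => a (j + m * k)) 1]
    constructor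
    · intro i; exact h1 (j + i * k)
    · intro i; rw [coeff_interleave a k hk j hj i]; exact h2 (j + i * k)
  · intro h
    have h' : ∀ j, j < k → ∀ i,
        (((a (j + i * k) : ℕ) : ℤ) = 0 ∨ ((a (j + i * k) : ℕ) : ℤ) = 1) ∧
        (coeff a k (j + i * k) = 0 ∨ coeff a k (j + i * k) = 1) := by
      intro j hj i
      have := h j hj
      rw [X1, Set.mem_setOf_eq, h7, key (fun m => a (j + m * k)) 1] at this
      exact ⟨this.1 i, by rw [← coeff_interleave a k hk j hj i]; exact this.2 i⟩
    have hcover : ∀ m : ℕ, ∃ j i, j < k ∧ m = j + i * k := by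
      intro m
      exact ⟨m % k, m / k, Nat.mod_lt m hk, (Nat.mod_add_div' m k).symm⟩
    constructor
    · intro m; obtain ⟨j, i, hj, rfl⟩ := hcover m; exact (h' j hj i).1
    · intro m; obtain ⟨j, i, hj, rfl⟩ := hcover m; exact (h' j hj i).2

end
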